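/- Let G be a connected bipartite graph with bipartition V1 ∪ V2, with |V1|, |V2| ≥ 2, such that G has no vertex of degree 1, and with N_G(x) ≠ V2 for all x ∈ V1 and N_G(y) ≠ V1 for all y ∈ V2. Then every vertex of G lying on a cycle of G is a shedding vertex of the complement graph Ḡ. -/
import Mathlib


open SimpleGraph

variable {V : Type*}

/-- `S` is an independent set of `G`: no two (distinct) members are adjacent. -/
def IsIndepOn (G : SimpleGraph V) (S : Set V) : Prop :=
  S.Pairwise fun u w => ¬ G.Adj u w

/-- The closed neighborhood `N_G[v]` of `v` in `G`. -/
def closedNbhd (G : SimpleGraph V) (v : V) : Set V :=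
  {u | G.Adj v u} ∪ {v}

/-- Vertex decomposability of the independence complex of the induced subgraph of `G`
on the vertex set `A`. -/
inductive VertexDecomp (G : SimpleGraph V) : Set V → Prop
  | discrete (A : Set V) (h : ∀ u ∈ A, ∀ w ∈ A, ¬ G.Adj u w) : VertexDecomp G A
  | shed (A : Set V) (v : V) (hv : v ∈ A)
      (hshed : ∀ S : Set V, S ⊆ A \ closedNbhd G v → IsIndepOn G S →
        ∃ x ∈ A, G.Adj v x ∧ IsIndepOn G (insert x S))
      (hdel : VertexDecomp G (A \ {v}))
      (hlink : VertexDecomp G (A \ closedNbhd G v)) : VertexDecomp G A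

/-- `v` is a shedding vertex of `H`: every independent set avoiding `N_H[v]` can be
extended by a neighbor of `v` to an independent set of `H \ {v}`. -/
def IsSheddingVertex (H : SimpleGraph V) (v : V) : Prop :=
  ∀ S : Set V, S ∩ closedNbhd H v = ∅ → IsIndepOn H S →
    ∃ x, H.Adj v x ∧ IsIndepOn H (insert x S)

theorem cycle_vertex_is_shedding_of_complement {V : Type*} [Fintype V]
    (G : SimpleGraph V) [DecidableRel G.Adj] (V1 V2 : Set V)
    (hunion : V1 ∪ V2 = Set.univ) (hdisj : Disjoint V1 V2)
    (hbip : ∀ u w, G.Adj u w → (u ∈ V1 ∧ w ∈ V2) ∨ (u ∈ V2 ∧ w ∈ V1))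
    (hconn : G.Connected)
    (hV1 : 2 ≤ V1.ncard) (hV2 : 2 ≤ V2.ncard)
    (hdeg : ∀ v, G.degree v ≠ 1)
    (hnbV2 : ∀ x ∈ V1, G.neighborSet x ≠ V2)
    (hnbV1 : ∀ y ∈ V2, G.neighborSet y ≠ V1) :
    ∀ v : V, (∃ c : G.Walk v v, c.IsCycle) → IsSheddingVertex Gᶜ v := by
  
  intro v _ S hS hindep
  have hdisj' := Set.disjoint_left.mp hdisj
  -- every element of S is a G-neighbor of v
  have hSN : ∀ u ∈ S, G.Adj v u := by
    intro u hu
    by_contra hadj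
    have hne : u ≠ v := by
      rintro rfl
      have : u ∈ S ∩ closedNbhd Gᶜ u := ⟨hu, Or.inr rfl⟩
      rw [hS] at this; exact this
    have : u ∈ S ∩ closedNbhd Gᶜ v :=
      ⟨hu, Or.inl ⟨fun h => hne h.symm, hadj⟩⟩
    rw [hS] at this; exact this
  -- S is a subsingleton
  have hsub : ∀ u ∈ S, ∀ w ∈ S, u = w := by
    intro u hu w hw
    by_contra hne
    have h1 := hindep hu hw hne
    have hadj : G.Adj u w := by
      by_contra h2
      exact h1 ⟨hne, h2⟩
    rcases hbip v u (hSN u hu) with ⟨hv1, hu2⟩ | ⟨hv2, hu1⟩ <;>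
      rcases hbip v w (hSN w hw) with ⟨hv1', hw2⟩ | ⟨hv2', hw1⟩ <;>
      rcases hbip u w hadj with ⟨hu1', hw2'⟩ | ⟨hu2', hw1'⟩ <;>
      first
        | exact hdisj' hu1' hu2
        | exact hdisj' hw1' hw2
        | exact hdisj' hu1 hu2'
        | exact hdisj' hw1 hw2'
        | exact hdisj' hv1 hv2'
        | exact hdisj' hv1' hv2
  rcases S.eq_empty_or_nonempty with rfl | ⟨u, hu⟩
  · -- S empty: find a non-neighbor of v on the other side
    have hv12 : v ∈ V1 ∨ v ∈ V2 := by
      have := Set.mem_univ v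
      rw [← hunion] at this; exact this
    have key : ∃ y, v ≠ y ∧ ¬ G.Adj v y := by
      rcases hv12 with hv1 | hv2
      · have hsubN : G.neighborSet v ⊆ V2 := by
          intro y hy
          rcases hbip v y hy with ⟨_, h⟩ | ⟨h, _⟩
          · exact h
          · exact (hdisj' hv1 h).elim
        obtain ⟨y, hy2, hyn⟩ := Set.exists_of_ssubset (hsubN.ssubset_of_ne (hnbV2 v hv1))
        exact ⟨y, fun h => hdisj' hv1 (h ▸ hy2), hyn⟩
      · have hsubN : G.neighborSet v ⊆ V1 := by
          intro y hy
          rcases hbip v y hy with ⟨h, _⟩ | ⟨_, h⟩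
          · exact (hdisj' h hv2).elim
          · exact h
        obtain ⟨y, hy1, hyn⟩ := Set.exists_of_ssubset (hsubN.ssubset_of_ne (hnbV1 v hv2))
        exact ⟨y, fun h => hdisj' (h ▸ hy1) hv2, hyn⟩
    obtain ⟨y, hne, hna⟩ := key
    exact ⟨y, ⟨hne, hna⟩, by simp [IsIndepOn]⟩
  · have hSu : S = {u} := Set.eq_singleton_iff_unique_mem.mpr ⟨hu, fun w hw => hsub w hw u hu⟩
    subst hSu
    have hvu : G.Adj v u := hSN u hu
    have hdeg2 : 2 ≤ G.degree u := by
      have h1 : 0 < G.degree u := by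
        rw [G.degree_pos_iff_exists_adj]
        exact ⟨v, hvu.symm⟩
      have h2 := hdeg u
      omega
    obtain ⟨x, hx, hxv⟩ := Finset.exists_mem_ne hdeg2 v
    rw [SimpleGraph.mem_neighborFinset] at hx
    have hvx : ¬ G.Adj v x := by
      intro h
      rcases hbip u v hvu.symm with ⟨hu1, hv2⟩ | ⟨hu2, hv1⟩ <;>
        rcases hbip u x hx with ⟨hu1', hx2⟩ | ⟨hu2', hx1⟩ <;>
        rcases hbip v x h with ⟨hv1', hx2'⟩ | ⟨hv2', hx1'⟩ <;>
        first
          | exact hdisj' hu1 hu2'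
          | exact hdisj' hu1' hu2
          | exact hdisj' hv1' hv2
          | exact hdisj' hv1 hv2'
          | exact hdisj' hx1' hx2
          | exact hdisj' hx1 hx2'
    refine ⟨x, ⟨fun h => hxv h.symm, hvx⟩, ?_⟩
    intro a ha b hb hab
    simp only [Set.mem_insert_iff, Set.mem_singleton_iff] at ha hb
    rcases ha with rfl | rfl <;> rcases hb with rfl | rfl
    · exact absurd rfl hab
    · exact fun h => h.2 hx.symm
    · exact fun h => h.2 hx
    · exact absurd rfl hab
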